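/- Correctness of one binary-splitting step: let V be a finite type with 1 ≤ k ≤ |V|, and let L, R be disjoint nonempty finsets with L ∪ R = V. Call j : ℕ feasible if j ≤ k, j ≤ |L|, and k ≤ j + |R|. For each feasible j, let A_j ∈ FreeGroup V be supported in L with kill_S A_j = 1 ↔ |S ∩ L| ≥ j for all S : Finset V, and let B_j ∈ FreeGroup V be supported in R with kill_S B_j = 1 ↔ |S ∩ R| ≥ k − j for all S : Finset V (for j = 0, respectively j = k when k ≤ |L| and k ≤ |R|, this forces A_0 = 1, respectively B_k = 1). Set D_j = A_j · B_j. Then for every commutator tree T whose leaves are labelled bijectively by the family (D_j) over all feasible j, the value of T is a solution of the k-out-of specification on V: kill_S (value T) = 1 ↔ |S| ≥ k, for every S : Finset V. -/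

import Mathlib

/-- The removal homomorphism: kills the generators with index in `S`. -/
def kill {V : Type*} [DecidableEq V] (S : Finset V) : FreeGroup V →* FreeGroup V :=
  FreeGroup.lift fun i => if i ∈ S then 1 else FreeGroup.of i

/-- `h` is supported in the finset `L`: it lies in the subgroup generated by the
generators indexed by `L`. -/
def SupportedIn {V : Type*} (h : FreeGroup V) (L : Finset V) : Prop :=
  h ∈ Subgroup.closure (FreeGroup.of '' (L : Set V))

/-- A commutator tree: a full binary tree whose leaves are labelled by words of the
free group on `V`. -/
inductive CommTree (V : Type*) : Type _ where
  | leaf : FreeGroup V → CommTree V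
  | node : CommTree V → CommTree V → CommTree V

namespace CommTree

open scoped commutatorElement

/-- The value of a commutator tree: a leaf evaluates to its label, an internal node
to the commutator of the values of its two children. -/
def value {V : Type*} : CommTree V → FreeGroup V
  | leaf h => h
  | node a b => ⁅a.value, b.value⁆

/-- The list of leaf labels, in left-to-right order. -/
def leaves {V : Type*} : CommTree V → List (FreeGroup V)
  | leaf h => [h]
  | node a b => a.leaves ++ b.leaves

end CommTree

/-- `j` is a feasible split index for threshold `k` with part sizes `n₁`, `n₂`. -/
def Feasible (k n₁ n₂ j : ℕ) : Prop :=
  j ≤ k ∧ j ≤ n₁ ∧ k ≤ j + n₂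

instance (k n₁ n₂ : ℕ) : DecidablePred (Feasible k n₁ n₂) := fun j => by
  unfold Feasible; infer_instance

theorem CommTree.leaves_ne_nil' {V : Type*} : ∀ T : CommTree V, T.leaves ≠ [] := by
  intro T
  induction T with
  | leaf h => simp [CommTree.leaves]
  | node a b iha ihb => simp [CommTree.leaves, iha]

section Aux
set_option linter.unusedSectionVars false
variable {V : Type*} [DecidableEq V]

theorem kill_of (S : Finset V) (a : V) :
    kill S (FreeGroup.of a) = if a ∈ S then 1 else FreeGroup.of a :=
  FreeGroup.lift_apply_of

theorem kill_kill {S S' : Finset V} (h : S ⊆ S') (x : FreeGroup V) :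
    kill S' (kill S x) = kill S' x := by
  have hc : (kill S').comp (kill S) = kill S' := by
    apply FreeGroup.ext_hom
    intro a
    simp only [MonoidHom.comp_apply, kill_of]
    by_cases ha : a ∈ S
    · simp [ha, h ha, kill_of]
    · simp [ha, kill_of]
  exact DFunLike.congr_fun hc x

theorem SupportedIn.kill_eq_self {x : FreeGroup V} {L S : Finset V} (h : SupportedIn x L)
    (hd : Disjoint L S) : kill S x = x := by
  unfold SupportedIn at h
  induction h using Subgroup.closure_induction with
  | mem y hy =>
    obtain ⟨i, hi, rfl⟩ := hy
    rw [kill_of, if_neg]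
    exact fun hiS => Finset.disjoint_left.mp hd (Finset.mem_coe.mp hi) hiS
  | one => simp
  | mul u v hu hv ihu ihv => rw [map_mul, ihu, ihv]
  | inv u hu ihu => rw [map_inv, ihu]

theorem SupportedIn.kill_eq_one {x : FreeGroup V} {L S : Finset V} (h : SupportedIn x L)
    (hs : L ⊆ S) : kill S x = 1 := by
  unfold SupportedIn at h
  induction h using Subgroup.closure_induction with
  | mem y hy =>
    obtain ⟨i, hi, rfl⟩ := hy
    rw [kill_of, if_pos (hs (Finset.mem_coe.mp hi))]
  | one => simp
  | mul u v hu hv ihu ihv => rw [map_mul, ihu, ihv, one_mul]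
  | inv u hu ihu => rw [map_inv, ihu, inv_one]

theorem SupportedIn.kill {x : FreeGroup V} {L : Finset V} (h : SupportedIn x L) (S : Finset V) :
    SupportedIn (kill S x) L := by
  unfold SupportedIn at h ⊢
  induction h using Subgroup.closure_induction with
  | mem y hy =>
    obtain ⟨i, hi, rfl⟩ := hy
    rw [kill_of]
    split_ifs
    · exact one_mem _
    · exact Subgroup.subset_closure ⟨i, hi, rfl⟩
  | one => rw [map_one]; exact one_mem _
  | mul u v hu hv ihu ihv => rw [map_mul]; exact mul_mem ihu ihv
  | inv u hu ihu => rw [map_inv]; exact inv_mem ihu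

theorem SupportedIn.mul {x y : FreeGroup V} {L : Finset V} (hx : SupportedIn x L)
    (hy : SupportedIn y L) : SupportedIn (x * y) L := mul_mem hx hy

theorem SupportedIn.inv {x : FreeGroup V} {L : Finset V} (hx : SupportedIn x L) :
    SupportedIn x⁻¹ L := inv_mem hx

theorem supported_disjoint_eq_one {z : FreeGroup V} {L R : Finset V} (hd : Disjoint L R)
    (h1 : SupportedIn z L) (h2 : SupportedIn z R) : z = 1 := by
  have e1 : kill R z = z := h1.kill_eq_self hd
  have e2 : kill R z = 1 := h2.kill_eq_one subset_rfl
  rw [← e1, e2]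

theorem mul_supported_eq_one {a b : FreeGroup V} {L R : Finset V} (hd : Disjoint L R)
    (ha : SupportedIn a L) (hb : SupportedIn b R) (h : a * b = 1) : a = 1 ∧ b = 1 := by
  have e1 : kill R a = a := ha.kill_eq_self hd
  have e2 : kill R b = 1 := hb.kill_eq_one subset_rfl
  have := congrArg (kill R) h
  rw [map_mul, e1, e2, mul_one, map_one] at this
  exact ⟨this, by rwa [this, one_mul] at h⟩

end Aux

section FG

theorem freeGroup_eq_one_of_isEmpty {ι : Type*} [IsEmpty ι] (x : FreeGroup ι) : x = 1 := by
  induction x using FreeGroup.induction_on with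
  | C1 => rfl
  | of a => exact isEmptyElim a
  | inv_of a _ => exact isEmptyElim a
  | mul u v hu hv => rw [hu, hv, one_mul]

theorem freeGroup_pow_eq_one {ι : Type*} {g : FreeGroup ι} {n : ℕ} (hn : n ≠ 0)
    (h : g ^ n = 1) : g = 1 := by
  by_contra hg
  have hfin : IsOfFinOrder g := isOfFinOrder_iff_pow_eq_one.mpr ⟨n, Nat.pos_of_ne_zero hn, h⟩
  have hfinset : (Subgroup.zpowers g : Set (FreeGroup ι)).Finite := hfin.finite_zpowers
  haveI : Finite (Subgroup.zpowers g) := hfinset.to_subtype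
  obtain ⟨κ, ⟨b⟩⟩ := (inferInstance : IsFreeGroup (Subgroup.zpowers g)).nonempty_basis
  haveI : Finite (FreeGroup κ) := Finite.of_equiv _ b.repr.toEquiv
  rcases isEmpty_or_nonempty κ with hκ | ⟨⟨i⟩⟩
  · have : (⟨g, Subgroup.mem_zpowers g⟩ : Subgroup.zpowers g) = 1 := by
      apply b.repr.injective
      rw [freeGroup_eq_one_of_isEmpty (b.repr _), map_one]
    exact hg (by simpa [Subtype.ext_iff] using this)
  · haveI := Classical.decEq κ
    obtain ⟨m, n, hmn, hpow⟩ :=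
      Finite.exists_ne_map_eq_of_infinite (fun n : ℕ => (FreeGroup.of i) ^ n)
    have := congrArg FreeGroup.norm hpow
    rw [FreeGroup.norm_of_pow, FreeGroup.norm_of_pow] at this
    exact hmn this

theorem freeGroup_zpow_eq_one {ι : Type*} {g : FreeGroup ι} {n : ℤ} (hn : n ≠ 0)
    (h : g ^ n = 1) : g = 1 := by
  have : g ^ n.natAbs = 1 := by
    rcases Int.natAbs_eq n with he | he
    · rw [← zpow_natCast, ← he, h]
    · have h2 := h
      rw [he, zpow_neg, zpow_natCast, inv_eq_one] at h2
      exact h2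
  exact freeGroup_pow_eq_one (by simpa using hn) this

theorem freeGroup_of_not_commute {ι : Type*} {a b : ι} (hab : a ≠ b) :
    FreeGroup.of a * FreeGroup.of b ≠ FreeGroup.of b * FreeGroup.of a := by
  classical
  intro hc
  have := congrArg (FreeGroup.lift fun j =>
    if j = a then Equiv.swap (0 : Fin 3) 1 else if j = b then Equiv.swap 1 2 else 1) hc
  simp only [map_mul, FreeGroup.lift_apply_of, if_pos rfl, if_neg hab, if_neg (Ne.symm hab)] at this
  exact absurd this (by decide)

theorem freeGroup_commute_exists {ι : Type*} {x y : FreeGroup ι} (h : Commute x y) :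
    ∃ c : FreeGroup ι, (∃ m : ℤ, x = c ^ m) ∧ (∃ n : ℤ, y = c ^ n) := by
  classical
  set H := Subgroup.closure ({x, y} : Set (FreeGroup ι)) with hH
  have hxH : x ∈ H := Subgroup.subset_closure (Set.mem_insert _ _)
  have hyH : y ∈ H := Subgroup.subset_closure (Set.mem_insert_of_mem _ rfl)
  have hcomm : ∀ a b : FreeGroup ι, a ∈ H → b ∈ H → Commute a b := by
    intro a b ha hb
    induction ha, hb using Subgroup.closure_induction₂ with
    | mem u v hu hv =>
      rcases hu with rfl | hu <;> rcases hv with rfl | hv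
      · exact Commute.refl _
      · rw [Set.mem_singleton_iff] at hv; subst hv; exact h
      · rw [Set.mem_singleton_iff] at hu; subst hu; exact h.symm
      · rw [Set.mem_singleton_iff] at hu hv; subst hu; subst hv; exact Commute.refl _
    | one_left v hv => exact Commute.one_left _
    | one_right v hv => exact Commute.one_right _
    | mul_left u v w hu hv hw h1 h2 => exact h1.mul_left h2
    | mul_right u v w hu hv hw h1 h2 => exact h1.mul_right h2
    | inv_left u v hu hv h1 => exact h1.inv_left
    | inv_right u v hu hv h1 => exact h1.inv_right
  obtain ⟨κ, ⟨b⟩⟩ := (inferInstance : IsFreeGroup H).nonempty_basis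
  have hbcomm : ∀ u v : FreeGroup κ, u * v = v * u := by
    intro u v
    apply b.repr.symm.injective
    rw [map_mul, map_mul]
    exact Subtype.ext (hcomm _ _ (b.repr.symm u).2 (b.repr.symm v).2)
  have hcyc : ∃ c' : FreeGroup κ, ∀ g : FreeGroup κ, ∃ n : ℤ, g = c' ^ n := by
    rcases isEmpty_or_nonempty κ with hκ | ⟨⟨i⟩⟩
    · exact ⟨1, fun g => ⟨0, by rw [freeGroup_eq_one_of_isEmpty g, zpow_zero]⟩⟩
    · have hsub : ∀ a : κ, a = i := by
        intro a
        by_contra hai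
        exact freeGroup_of_not_commute hai (hbcomm _ _)
      refine ⟨FreeGroup.of i, fun g => ?_⟩
      induction g using FreeGroup.induction_on with
      | C1 => exact ⟨0, by rw [zpow_zero]⟩
      | of a => exact ⟨1, by rw [hsub a, zpow_one]⟩
      | inv_of a ih =>
        obtain ⟨n, hn⟩ := ih
        exact ⟨-n, by rw [hn, zpow_neg]⟩
      | mul u v hu hv =>
        obtain ⟨m, hm⟩ := hu
        obtain ⟨n, hn⟩ := hv
        exact ⟨m + n, by rw [hm, hn, zpow_add]⟩
  obtain ⟨c', hc'⟩ := hcyc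
  refine ⟨((b.repr.symm c' : H) : FreeGroup ι), ?_, ?_⟩
  · obtain ⟨m, hm⟩ := hc' (b.repr ⟨x, hxH⟩)
    refine ⟨m, ?_⟩
    have he : (⟨x, hxH⟩ : H) = (b.repr.symm c') ^ m := by
      apply b.repr.injective
      rw [map_zpow, hm, MulEquiv.apply_symm_apply]
    have := congrArg (Subtype.val) he
    simpa using this
  · obtain ⟨n, hn⟩ := hc' (b.repr ⟨y, hyH⟩)
    refine ⟨n, ?_⟩
    have he : (⟨y, hyH⟩ : H) = (b.repr.symm c') ^ n := by
      apply b.repr.injective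
      rw [map_zpow, hn, MulEquiv.apply_symm_apply]
    have := congrArg (Subtype.val) he
    simpa using this

theorem key_lemma {ι : Type*} {x y : FreeGroup ι} (h : Commute x y) (hx : x ≠ 1)
    (φ : FreeGroup ι →* FreeGroup ι) (hφ : φ x = 1) : φ y = 1 := by
  obtain ⟨c, ⟨m, rfl⟩, ⟨n, rfl⟩⟩ := freeGroup_commute_exists h
  have hm : m ≠ 0 := by rintro rfl; simp at hx
  have h1 : (φ c) ^ m = 1 := by rw [← map_zpow, hφ]
  have h2 : φ c = 1 := freeGroup_zpow_eq_one hm h1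
  rw [map_zpow, h2, one_zpow]

end FG

theorem split_lemma (k l r s t : ℕ) (hs : s ≤ l) (ht : t ≤ r)
    (J₁ J₂ : Finset ℕ) (hd : Disjoint J₁ J₂) (h1 : J₁.Nonempty)
    (hfeas : ∀ j ∈ J₁ ∪ J₂, j ≤ k ∧ j ≤ l ∧ k ≤ j + r)
    (hbad : ∀ j ∈ J₁ ∪ J₂, ¬(j ≤ s ∧ k - j ≤ t)) :
    ∃ s' t', s ≤ s' ∧ s' ≤ l ∧ t ≤ t' ∧ t' ≤ r ∧
      (((∃ j ∈ J₁, j ≤ s' ∧ k - j ≤ t') ∧ (∀ j ∈ J₂, ¬(j ≤ s' ∧ k - j ≤ t'))) ∨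
       ((∀ j ∈ J₁, ¬(j ≤ s' ∧ k - j ≤ t')) ∧ (∃ j ∈ J₂, j ≤ s' ∧ k - j ≤ t'))) := by
  classical
  set f : ℕ → ℕ := fun j => if k ≤ j + t ∧ j ≤ s then 0
    else if j ≤ s then k - j - t else (r - t) + (j - s) with hf
  obtain ⟨j₀, hj₀J, hj₀min⟩ :=
    Finset.exists_min_image (J₁ ∪ J₂) f (h1.mono Finset.subset_union_left)
  obtain ⟨hj₀k, hj₀l, hj₀r⟩ := hfeas j₀ hj₀J
  have hbad₀ := hbad j₀ hj₀J
  refine ⟨s + (f j₀ - (r - t)), min r (t + f j₀), Nat.le_add_right s _, ?_,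
    le_min ht (by omega), min_le_left _ _, ?_⟩
  · simp only [hf]; split_ifs <;> omega
  · have hQ0 : j₀ ≤ s + (f j₀ - (r - t)) ∧ k - j₀ ≤ min r (t + f j₀) := by
      simp only [hf]; split_ifs <;> omega
    have huniq : ∀ j ∈ J₁ ∪ J₂,
        (j ≤ s + (f j₀ - (r - t)) ∧ k - j ≤ min r (t + f j₀)) → j = j₀ := by
      intro j hj hQ
      obtain ⟨hjk, hjl, hjr⟩ := hfeas j hj
      have hbadj := hbad j hj
      have hmin := hj₀min j hj
      simp only [hf] at hQ hmin
      split_ifs at hQ hmin <;> omega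
    rcases Finset.mem_union.mp hj₀J with hmem | hmem
    · refine Or.inl ⟨⟨j₀, hmem, hQ0⟩, fun j hj hQj => ?_⟩
      have := huniq j (Finset.mem_union_right _ hj) hQj
      subst this
      exact Finset.disjoint_left.mp hd hmem hj
    · refine Or.inr ⟨fun j hj hQj => ?_, ⟨j₀, hmem, hQ0⟩⟩
      have := huniq j (Finset.mem_union_left _ hj) hQj
      subst this
      exact Finset.disjoint_left.mp hd hj hmem


open scoped commutatorElement

theorem binary_splitting_step_correct {V : Type*} [Fintype V] [DecidableEq V]
    (k : ℕ) (hk₁ : 1 ≤ k) (hk₂ : k ≤ Fintype.card V)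
    (L R : Finset V) (hdisj : Disjoint L R)
    (hLne : L.Nonempty) (hRne : R.Nonempty) (hunion : L ∪ R = Finset.univ)
    (A B : ℕ → FreeGroup V)
    (hAsupp : ∀ j, Feasible k L.card R.card j → SupportedIn (A j) L)
    (hBsupp : ∀ j, Feasible k L.card R.card j → SupportedIn (B j) R)
    (hA : ∀ j, Feasible k L.card R.card j →
      ∀ S : Finset V, kill S (A j) = 1 ↔ j ≤ (S ∩ L).card)
    (hB : ∀ j, Feasible k L.card R.card j →
      ∀ S : Finset V, kill S (B j) = 1 ↔ k - j ≤ (S ∩ R).card)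
    (T : CommTree V)
    (hT : (T.leaves : Multiset (FreeGroup V)) =
      (((Finset.range (k + 1)).filter (Feasible k L.card R.card)).val).map
        (fun j => A j * B j)) :
    ∀ S : Finset V, kill S T.value = 1 ↔ k ≤ S.card := by
  
  classical
  set F := (Finset.range (k + 1)).filter (Feasible k L.card R.card) with hFdef
  set D := fun j => A j * B j with hDdef
  have hfeasF : ∀ j ∈ F, Feasible k L.card R.card j := fun j hj => (Finset.mem_filter.mp hj).2
  have hcardS : ∀ S : Finset V, (S ∩ L).card + (S ∩ R).card = S.card := by
    intro S
    rw [← Finset.card_union_of_disjoint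
        (hdisj.mono Finset.inter_subset_right Finset.inter_subset_right),
      ← Finset.inter_union_distrib_left, hunion, Finset.inter_univ]
  have killD : ∀ j, Feasible k L.card R.card j → ∀ S : Finset V,
      (kill S (D j) = 1 ↔ (j ≤ (S ∩ L).card ∧ k - j ≤ (S ∩ R).card)) := by
    intro j hj S
    show kill S (A j * B j) = 1 ↔ _
    constructor
    · intro h
      rw [map_mul] at h
      have h' := mul_supported_eq_one hdisj ((hAsupp j hj).kill S) ((hBsupp j hj).kill S) h
      exact ⟨(hA j hj S).mp h'.1, (hB j hj S).mp h'.2⟩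
    · rintro ⟨h1, h2⟩
      rw [map_mul, (hA j hj S).mpr h1, (hB j hj S).mpr h2, one_mul]
  have hDinj : ∀ j ∈ F, ∀ j' ∈ F, D j = D j' → j = j' := by
    intro j hj j' hj' hDD
    have hfj := hfeasF j hj
    have hfj' := hfeasF j' hj'
    have hDD' : A j * B j = A j' * B j' := hDD
    have hz : (A j')⁻¹ * A j = B j' * (B j)⁻¹ := by
      calc (A j')⁻¹ * A j = (A j')⁻¹ * (A j * B j) * (B j)⁻¹ := by group
      _ = (A j')⁻¹ * (A j' * B j') * (B j)⁻¹ := by rw [hDD']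
      _ = B j' * (B j)⁻¹ := by group
    have hzL : SupportedIn ((A j')⁻¹ * A j) L := ((hAsupp j' hfj').inv).mul (hAsupp j hfj)
    have hzR : SupportedIn ((A j')⁻¹ * A j) R := by
      rw [hz]; exact (hBsupp j' hfj').mul ((hBsupp j hfj).inv)
    have hz1 : (A j')⁻¹ * A j = 1 := supported_disjoint_eq_one hdisj hzL hzR
    have hAeq : A j' = A j := inv_mul_eq_one.mp hz1
    have hle : ∀ a b : ℕ, Feasible k L.card R.card a → Feasible k L.card R.card b →
        A a = A b → b ≤ a := by
      intro a b hfa hfb hab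
      obtain ⟨S₁, hS₁L, hS₁c⟩ := Finset.exists_subset_card_eq hfa.2.1
      have e1 : S₁ ∩ L = S₁ := Finset.inter_eq_left.mpr hS₁L
      have h₁ : kill S₁ (A a) = 1 := (hA a hfa S₁).mpr (by rw [e1, hS₁c])
      have h₂ : kill S₁ (A b) = 1 := by rw [← hab]; exact h₁
      have := (hA b hfb S₁).mp h₂
      rw [e1, hS₁c] at this
      exact this
    exact le_antisymm (hle j' j hfj' hfj hAeq) (hle j j' hfj hfj' hAeq.symm)
  have hextend : ∀ (S : Finset V) (s' t' : ℕ), (S ∩ L).card ≤ s' → s' ≤ L.card →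
      (S ∩ R).card ≤ t' → t' ≤ R.card →
      ∃ S' : Finset V, S ⊆ S' ∧ (S' ∩ L).card = s' ∧ (S' ∩ R).card = t' := by
    intro S s' t' h1 h2 h3 h4
    obtain ⟨X, hX1, hX2, hX3⟩ := Finset.exists_subsuperset_card_eq Finset.inter_subset_right h1 h2
    obtain ⟨Y, hY1, hY2, hY3⟩ := Finset.exists_subsuperset_card_eq Finset.inter_subset_right h3 h4
    have hYL : Y ∩ L = ∅ :=
      Finset.disjoint_iff_inter_eq_empty.mp ((hdisj.symm.mono_left hY2).symm).symm
    have hXR : X ∩ R = ∅ :=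
      Finset.disjoint_iff_inter_eq_empty.mp (hdisj.mono_left hX2)
    refine ⟨X ∪ Y, ?_, ?_, ?_⟩
    · intro v hv
      have hvLR : v ∈ L ∪ R := by rw [hunion]; exact Finset.mem_univ v
      rcases Finset.mem_union.mp hvLR with hL | hR
      · exact Finset.mem_union_left _ (hX1 (Finset.mem_inter.mpr ⟨hv, hL⟩))
      · exact Finset.mem_union_right _ (hY1 (Finset.mem_inter.mpr ⟨hv, hR⟩))
    · rw [Finset.union_inter_distrib_right, Finset.inter_eq_left.mpr hX2, hYL,
        Finset.union_empty, hX3]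
    · rw [Finset.union_inter_distrib_right, Finset.inter_eq_left.mpr hY2, hXR,
        Finset.empty_union, hY3]
  have main : ∀ T' : CommTree V, ∀ J : Finset ℕ, J ⊆ F →
      (T'.leaves : Multiset (FreeGroup V)) = J.val.map D →
      ∀ S : Finset V,
        (kill S T'.value = 1 ↔ ∃ j ∈ J, j ≤ (S ∩ L).card ∧ k - j ≤ (S ∩ R).card) := by
    intro T'
    induction T' with
    | leaf h =>
      intro J hJF hleaves S
      have hcard : J.card = 1 := by
        have hc := congrArg Multiset.card hleaves
        simp only [CommTree.leaves, Multiset.coe_card, List.length_singleton,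
          Multiset.card_map] at hc
        exact hc.symm
      obtain ⟨j₀, rfl⟩ := Finset.card_eq_one.mp hcard
      have hh : h = D j₀ := by
        have : ([h] : Multiset (FreeGroup V)) = {D j₀} := by
          simpa [CommTree.leaves] using hleaves
        simpa using this
      have hj₀F : j₀ ∈ F := hJF (Finset.mem_singleton_self j₀)
      subst hh
      show kill S (D j₀) = 1 ↔ _
      rw [killD j₀ (hfeasF j₀ hj₀F) S]
      simp
    | node a b iha ihb =>
      intro J hJF hleaves S
      have hDinjJ : ∀ x ∈ J.val, ∀ y ∈ J.val, D x = D y → x = y :=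
        fun x hx y hy => hDinj x (hJF hx) y (hJF hy)
      have hMnodup : (J.val.map D).Nodup := J.nodup.map_on hDinjJ
      have hadd : (a.leaves : Multiset (FreeGroup V)) + (b.leaves : Multiset (FreeGroup V))
          = J.val.map D := by
        have h' := hleaves
        simp only [CommTree.leaves, Multiset.coe_add] at h'
        exact h'
      have hab : ((a.leaves : Multiset (FreeGroup V)) + b.leaves).Nodup := by
        rw [hadd]; exact hMnodup
      obtain ⟨hna, hnb, hdisjab⟩ := Multiset.nodup_add.mp hab
      set J₁ := J.filter (fun j => D j ∈ a.leaves) with hJ₁def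
      set J₂ := J \ J₁ with hJ₂def
      have hJ₁J : J₁ ⊆ J := Finset.filter_subset _ _
      have hJ₂J : J₂ ⊆ J := Finset.sdiff_subset
      have hunionJ : J₁ ∪ J₂ = J := Finset.union_sdiff_of_subset hJ₁J
      have hdJ : Disjoint J₁ J₂ := Finset.disjoint_sdiff
      have hla : (a.leaves : Multiset (FreeGroup V)) = J₁.val.map D := by
        refine (Multiset.Nodup.ext hna (Multiset.Nodup.map_on
          (fun x hx y hy => hDinjJ x (hJ₁J hx) y (hJ₁J hy)) J₁.nodup)).mpr ?_
        intro x
        simp only [Multiset.mem_coe, Multiset.mem_map, Finset.mem_val]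
        constructor
        · intro hx
          have hxM : x ∈ J.val.map D := by
            rw [← hadd]; exact Multiset.mem_add.mpr (Or.inl hx)
          obtain ⟨j, hjJ, hjx⟩ := Multiset.mem_map.mp hxM
          exact ⟨j, Finset.mem_filter.mpr ⟨hjJ, by rw [hjx]; exact hx⟩, hjx⟩
        · rintro ⟨j, hjJ₁, rfl⟩
          exact (Finset.mem_filter.mp hjJ₁).2
      have hlb : (b.leaves : Multiset (FreeGroup V)) = J₂.val.map D := by
        refine (Multiset.Nodup.ext hnb (Multiset.Nodup.map_on
          (fun x hx y hy => hDinjJ x (hJ₂J hx) y (hJ₂J hy)) J₂.nodup)).mpr ?_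
        intro x
        simp only [Multiset.mem_coe, Multiset.mem_map, Finset.mem_val]
        constructor
        · intro hx
          have hxM : x ∈ J.val.map D := by
            rw [← hadd]; exact Multiset.mem_add.mpr (Or.inr hx)
          obtain ⟨j, hjJ, hjx⟩ := Multiset.mem_map.mp hxM
          refine ⟨j, Finset.mem_sdiff.mpr ⟨hjJ, fun hj1 => ?_⟩, hjx⟩
          have hDa : D j ∈ (a.leaves : Multiset (FreeGroup V)) :=
            (Finset.mem_filter.mp hj1).2
          exact Multiset.disjoint_left.mp hdisjab hDa (by rw [hjx]; exact hx)
        · rintro ⟨j, hjJ₂, rfl⟩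
          obtain ⟨hjJ, hj1⟩ := Finset.mem_sdiff.mp hjJ₂
          have : D j ∈ J.val.map D := Multiset.mem_map_of_mem _ hjJ
          rw [← hadd] at this
          rcases Multiset.mem_add.mp this with h' | h'
          · exact absurd (Finset.mem_filter.mpr ⟨hjJ, h'⟩) hj1
          · exact h'
      have hne1 : J₁.Nonempty := by
        obtain ⟨x, hx⟩ := List.exists_mem_of_ne_nil _ (CommTree.leaves_ne_nil' a)
        have : x ∈ J₁.val.map D := by rw [← hla]; exact hx
        obtain ⟨j, hj, -⟩ := Multiset.mem_map.mp this
        exact ⟨j, hj⟩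
      have hne2 : J₂.Nonempty := by
        obtain ⟨x, hx⟩ := List.exists_mem_of_ne_nil _ (CommTree.leaves_ne_nil' b)
        have : x ∈ J₂.val.map D := by rw [← hlb]; exact hx
        obtain ⟨j, hj, -⟩ := Multiset.mem_map.mp this
        exact ⟨j, hj⟩
      have IHa := iha J₁ (hJ₁J.trans hJF) hla
      have IHb := ihb J₂ (hJ₂J.trans hJF) hlb
      show kill S ⁅a.value, b.value⁆ = 1 ↔ _
      rw [map_commutatorElement]
      constructor
      · intro hone
        by_contra hnex
        have hxne : kill S a.value ≠ 1 := by
          intro h1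
          obtain ⟨j, hj, hQ⟩ := (IHa S).mp h1
          exact hnex ⟨j, hJ₁J hj, hQ⟩
        have hyne : kill S b.value ≠ 1 := by
          intro h1
          obtain ⟨j, hj, hQ⟩ := (IHb S).mp h1
          exact hnex ⟨j, hJ₂J hj, hQ⟩
        have hcomm : Commute (kill S a.value) (kill S b.value) :=
          commutatorElement_eq_one_iff_commute.mp hone
        have hsL : (S ∩ L).card ≤ L.card := Finset.card_le_card Finset.inter_subset_right
        have htR : (S ∩ R).card ≤ R.card := Finset.card_le_card Finset.inter_subset_right
        have hfeas' : ∀ j ∈ J₁ ∪ J₂, j ≤ k ∧ j ≤ L.card ∧ k ≤ j + R.card := by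
          intro j hj
          rw [hunionJ] at hj
          exact hfeasF j (hJF hj)
        have hbad' : ∀ j ∈ J₁ ∪ J₂, ¬(j ≤ (S ∩ L).card ∧ k - j ≤ (S ∩ R).card) := by
          intro j hj hQ
          rw [hunionJ] at hj
          exact hnex ⟨j, hj, hQ⟩
        obtain ⟨s', t', hs1, hs2, ht1, ht2, hcases⟩ :=
          split_lemma k L.card R.card (S ∩ L).card (S ∩ R).card hsL htR J₁ J₂ hdJ hne1
            hfeas' hbad'
        obtain ⟨S', hSS', hS'L, hS'R⟩ := hextend S s' t' hs1 hs2 ht1 ht2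
        rcases hcases with ⟨⟨j, hj, hQj⟩, hnot2⟩ | ⟨hnot1, ⟨j, hj, hQj⟩⟩
        · have h1 : kill S' a.value = 1 := (IHa S').mpr ⟨j, hj, by rw [hS'L, hS'R]; exact hQj⟩
          have h2 : kill S' b.value ≠ 1 := by
            intro h2'
            obtain ⟨j', hj', hQ'⟩ := (IHb S').mp h2'
            rw [hS'L, hS'R] at hQ'
            exact hnot2 j' hj' hQ'
          apply h2
          rw [← kill_kill hSS' b.value]
          exact key_lemma hcomm hxne (kill S') (by rw [kill_kill hSS']; exact h1)
        · have h1 : kill S' b.value = 1 := (IHb S').mpr ⟨j, hj, by rw [hS'L, hS'R]; exact hQj⟩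
          have h2 : kill S' a.value ≠ 1 := by
            intro h2'
            obtain ⟨j', hj', hQ'⟩ := (IHa S').mp h2'
            rw [hS'L, hS'R] at hQ'
            exact hnot1 j' hj' hQ'
          apply h2
          rw [← kill_kill hSS' a.value]
          exact key_lemma hcomm.symm hyne (kill S') (by rw [kill_kill hSS']; exact h1)
      · rintro ⟨j, hjJ, hQ⟩
        have hjU : j ∈ J₁ ∪ J₂ := by rw [hunionJ]; exact hjJ
        rcases Finset.mem_union.mp hjU with hj | hj
        · rw [(IHa S).mpr ⟨j, hj, hQ⟩]
          exact commutatorElement_one_left _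
        · rw [(IHb S).mpr ⟨j, hj, hQ⟩]
          exact commutatorElement_one_right _
  intro S
  rw [main T F subset_rfl hT S]
  have hSL : (S ∩ L).card ≤ L.card := Finset.card_le_card Finset.inter_subset_right
  have hSR : (S ∩ R).card ≤ R.card := Finset.card_le_card Finset.inter_subset_right
  have hsum := hcardS S
  constructor
  · rintro ⟨j, hjF, hQ1, hQ2⟩
    obtain ⟨h1, h2, h3⟩ := hfeasF j hjF
    omega
  · intro hk
    refine ⟨min k (S ∩ L).card, ?_, by omega, by omega⟩
    refine Finset.mem_filter.mpr ⟨Finset.mem_range.mpr (by omega), ?_⟩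
    exact ⟨by omega, by omega, by omega⟩
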